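/- arXiv:1402.1273 — 5 statements merged into one kernel-verified Lean document; each statement's English description precedes it below -/
import Mathlib

section
/- Let A be a ℤ-graded left-artinian ring, M a nonzero ℤ-graded A-module that is simple as an ungraded A-module. Then M is not isomorphic as a graded module to any nontrivial shift M(i) with i ≠ 0. -/
/-- A family of additive subgroups `ℳ` of a module `M` over a `ℤ`-graded ring with
grading `𝒜` is a graded module structure if `𝒜 i • ℳ j ⊆ ℳ (i + j)`. -/
def IsGradedSMul {A M : Type*} [Ring A] [AddCommGroup M] [Module A M]
    (𝒜 : ℤ → AddSubgroup A) (ℳ : ℤ → AddSubgroup M) : Prop :=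
  ∀ ⦃i j : ℤ⦄ ⦃a : A⦄ ⦃m : M⦄, a ∈ 𝒜 i → m ∈ ℳ j → a • m ∈ ℳ (i + j)

/-- The degree `d + j` component of `q • m` for `m` homogeneous of degree `j` is
`q_d • m` where `q_d` is the degree-`d` component of `q`. -/
private lemma comp_smul_of_mem
    {A : Type*} [Ring A] {M : Type*} [AddCommGroup M] [Module A M]
    (𝒜 : ℤ → AddSubgroup A) [GradedRing 𝒜]
    (ℳ : ℤ → AddSubgroup M) [DirectSum.Decomposition ℳ]
    (hgr : IsGradedSMul 𝒜 ℳ)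
    (q : A) {j : ℤ} {m : M} (hm : m ∈ ℳ j) (d : ℤ) :
    ((DirectSum.decompose ℳ (q • m) (d + j) : ℳ (d + j)) : M)
      = ((DirectSum.decompose 𝒜 q d : 𝒜 d) : A) • m := by
  induction q using DirectSum.Decomposition.inductionOn 𝒜 with
  | zero => simp
  | homogeneous a =>
      rename_i k
      obtain ⟨a, ha⟩ := a
      by_cases hkd : k = d
      · subst hkd
        rw [DirectSum.decompose_of_mem_same 𝒜 ha,
            DirectSum.decompose_of_mem_same ℳ (hgr ha hm)]
      · rw [DirectSum.decompose_of_mem_ne 𝒜 ha hkd,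
            DirectSum.decompose_of_mem_ne ℳ (hgr ha hm)
              (fun h => hkd (by omega)), zero_smul]
  | add q₁ q₂ h₁ h₂ =>
      rw [add_smul, DirectSum.decompose_add, DirectSum.decompose_add,
          DirectSum.add_apply, DirectSum.add_apply, AddSubgroup.coe_add,
          AddSubgroup.coe_add, h₁, h₂, add_smul]

/-- **A graded simple module is not isomorphic to its nontrivial shifts.**
Let `A` be a `ℤ`-graded left-artinian ring and `M` a nonzero `ℤ`-graded
`A`-module which is simple as an ungraded module.  Then for `i ≠ 0` there is no
isomorphism of graded modules `M ≃ M(i)`, i.e. no `A`-linear bijection carrying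
`ℳ j` into `ℳ (i + j)` for all `j`. -/
theorem no_graded_iso_to_shift
    {A : Type*} [Ring A] [IsArtinian A A]
    (𝒜 : ℤ → AddSubgroup A) [GradedRing 𝒜]
    {M : Type*} [AddCommGroup M] [Module A M]
    (ℳ : ℤ → AddSubgroup M) [DirectSum.Decomposition ℳ]
    (hgr : IsGradedSMul 𝒜 ℳ)
    [Nontrivial M] (hsimple : IsSimpleModule A M)
    (i : ℤ) (hi : i ≠ 0) :
    ¬ ∃ e : M ≃ₗ[A] M, ∀ j : ℤ, ∀ x ∈ ℳ j, e x ∈ ℳ (i + j) := by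
  classical
  rintro ⟨e, he⟩
  -- a nonzero homogeneous element x of some degree j0
  obtain ⟨m0, hm0⟩ := exists_ne (0 : M)
  have hex : ∃ j0 : ℤ, ((DirectSum.decompose ℳ m0 j0 : ℳ j0) : M) ≠ 0 := by
    by_contra h
    push_neg at h
    apply hm0
    rw [← DirectSum.sum_support_decompose ℳ m0]
    exact Finset.sum_eq_zero fun j _ => h j
  obtain ⟨j0, hx⟩ := hex
  set x : M := ((DirectSum.decompose ℳ m0 j0 : ℳ j0) : M) with hxdef
  have hxmem : x ∈ ℳ j0 := SetLike.coe_mem _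
  have hy : e x ∈ ℳ (i + j0) := he j0 x hxmem
  -- e x - x is nonzero
  have hz : e x - x ≠ 0 := by
    intro h
    have hxy : e x = x := by rwa [sub_eq_zero] at h
    rw [hxy] at hy
    exact absurd (DirectSum.degree_eq_of_mem_mem ℳ hxmem hy hx) (by omega)
  -- by simplicity, x is a multiple of e x - x
  have hspan : Submodule.span A {e x - x} = ⊤ := by
    rcases eq_bot_or_eq_top (Submodule.span A {e x - x}) with hb | ht
    · exact absurd (Submodule.span_singleton_eq_bot.mp hb) hz
    · exact ht
  obtain ⟨q, hq⟩ : ∃ q : A, q • (e x - x) = x := by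
    have : x ∈ Submodule.span A {e x - x} := hspan ▸ Submodule.mem_top
    exact Submodule.mem_span_singleton.mp this
  -- the "coefficients"
  set t : ℤ → M := fun k => ((DirectSum.decompose 𝒜 q (k * i) : 𝒜 (k * i)) : A) • x
    with htdef
  -- the key componentwise equations
  have hEq : ∀ d : ℤ, (if d = 0 then x else 0) = e (t (d - 1)) - t d := by
    intro d
    have h1 : ((DirectSum.decompose ℳ (q • e x) (d * i + j0) : ℳ (d * i + j0)) : M)
        = e (t (d - 1)) := by
      have harith : (d - 1) * i + (i + j0) = d * i + j0 := by ring
      have h' := comp_smul_of_mem 𝒜 ℳ hgr q hy ((d - 1) * i)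
      rw [harith] at h'
      rw [h', htdef]
      simp only [map_smul]
    have h2 : ((DirectSum.decompose ℳ (q • x) (d * i + j0) : ℳ (d * i + j0)) : M)
        = t d := by
      have h' := comp_smul_of_mem 𝒜 ℳ hgr q hxmem (d * i)
      rw [h', htdef]
    have h3 : q • e x - q • x = x := by rw [← smul_sub]; exact hq
    have h4 := congrArg (fun w => ((DirectSum.decompose ℳ w (d * i + j0)
        : ℳ (d * i + j0)) : M)) h3
    simp only at h4
    rw [DirectSum.decompose_sub, DirectSum.sub_apply, AddSubgroup.coe_sub, h1, h2] at h4
    rw [h4]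
    by_cases hd : d = 0
    · subst hd
      rw [if_pos rfl, show (0 : ℤ) * i + j0 = j0 by ring,
        DirectSum.decompose_of_mem_same ℳ hxmem]
    · rw [if_neg hd, DirectSum.decompose_of_mem_ne ℳ hxmem
        (show j0 ≠ d * i + j0 by
          intro h
          exact hd (by
            have : d * i = 0 := by omega
            rcases mul_eq_zero.mp this with h' | h'
            · exact h'
            · exact absurd h' hi))]
  -- the set of nonzero coefficients is finite
  have hfin : {k : ℤ | t k ≠ 0}.Finite := by
    have hsupp : {c : ℤ | ((DirectSum.decompose 𝒜 q c : 𝒜 c) : A) ≠ 0}.Finite := by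
      apply Set.Finite.subset (Finset.finite_toSet (DirectSum.decompose 𝒜 q).support)
      intro c hc
      simp only [Set.mem_setOf_eq] at hc
      simp only [Finset.coe_sort_coe, Finset.mem_coe, DFinsupp.mem_support_iff]
      intro h0
      exact hc (by rw [h0]; rfl)
    have hpre : ((fun k : ℤ => k * i) ⁻¹'
        {c : ℤ | ((DirectSum.decompose 𝒜 q c : 𝒜 c) : A) ≠ 0}).Finite := by
      apply Set.Finite.preimage _ hsupp
      intro k1 _ k2 _ h
      exact mul_right_cancel₀ hi h
    apply hpre.subset
    intro k hk
    simp only [Set.mem_setOf_eq] at hk ⊢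
    intro h0
    apply hk
    rw [htdef]
    simp only [h0, zero_smul]
  -- upward propagation kills nonnegative coefficients
  have hup : ∀ k : ℤ, 0 ≤ k → t k = 0 := by
    intro k0 hk0
    by_contra hne
    have hmem : ∀ j : ℕ, t (k0 + j) ≠ 0 := by
      intro j
      induction j with
      | zero => simpa using hne
      | succ n ih =>
          have hd := hEq (k0 + (n + 1 : ℕ))
          rw [if_neg (by push_cast; omega)] at hd
          have harith : (k0 + ((n + 1 : ℕ) : ℤ)) - 1 = k0 + (n : ℕ) := by push_cast; ring
          rw [harith] at hd
          have ht' : t (k0 + ((n + 1 : ℕ) : ℤ)) = e (t (k0 + (n : ℕ))) := by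
            have := sub_eq_zero.mp hd.symm
            exact this.symm
          rw [ht']
          intro h0
          exact ih (by simpa using (map_eq_zero_iff e e.injective).mp h0)
    exact Set.infinite_of_injective_forall_mem
      (f := fun j : ℕ => k0 + (j : ℤ))
      (fun a b h => by simp only [add_right_inj, Nat.cast_inj] at h; exact h) hmem hfin
  -- downward propagation kills negative coefficients
  have hdown : ∀ k : ℤ, k ≤ -1 → t k = 0 := by
    intro k0 hk0
    by_contra hne
    have hmem : ∀ j : ℕ, t (k0 - j) ≠ 0 := by
      intro j
      induction j with
      | zero => simpa using hne
      | succ n ih =>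
          have hd := hEq (k0 - (n : ℕ))
          rw [if_neg (by omega)] at hd
          have hzero : (0 : M) = e (t (k0 - (n : ℕ) - 1)) - t (k0 - (n : ℕ)) := hd
          have ht' : t (k0 - (n : ℕ)) = e (t (k0 - (n : ℕ) - 1)) :=
            (sub_eq_zero.mp hzero.symm).symm
          have harith : k0 - ((n + 1 : ℕ) : ℤ) = k0 - (n : ℕ) - 1 := by push_cast; ring
          rw [harith]
          intro h0
          apply ih
          rw [ht', h0]
          simp
    exact Set.infinite_of_injective_forall_mem
      (f := fun j : ℕ => k0 - (j : ℤ))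
      (fun a b h => by simp only [sub_right_inj, Nat.cast_inj] at h; exact h) hmem hfin
  -- conclusion
  have h0 := hEq 0
  rw [if_pos rfl] at h0
  rw [show (0 : ℤ) - 1 = -1 by norm_num] at h0
  rw [hdown (-1) le_rfl, hup 0 le_rfl] at h0
  simp only [map_zero, sub_zero] at h0
  exact hx h0
end

section
/- Let A be a ℤ-graded left-artinian ring, and let M, N be ℤ-graded left A-modules of finite length with N simple as a graded module. If φ : M → N is a (not necessarily graded) surjective A-module homomorphism between the underlying ungraded modules, then some homogeneous component φ_i : M → N(i) of φ is a surjective morphism of graded modules. -/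
/-- A submodule is graded when it is stable under taking homogeneous components. -/
def Submodule.IsGraded {A N : Type*} [Ring A] [AddCommGroup N] [Module A N]
    (𝒩 : ℤ → AddSubgroup N) [DirectSum.Decomposition 𝒩] (p : Submodule A N) : Prop :=
  ∀ (j : ℤ), ∀ x ∈ p, (DirectSum.decompose 𝒩 x j : N) ∈ p

/-- A graded module is graded-simple if it is nonzero and its only graded
submodules are `⊥` and `⊤`. -/
def IsGradedSimpleModule (A : Type*) {N : Type*} [Ring A] [AddCommGroup N] [Module A N]
    (𝒩 : ℤ → AddSubgroup N) [DirectSum.Decomposition 𝒩] : Prop :=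
  Nontrivial N ∧ ∀ p : Submodule A N, p.IsGraded 𝒩 → p = ⊥ ∨ p = ⊤

open DirectSum


section Aux

set_option synthInstance.maxHeartbeats 1000000
set_option maxHeartbeats 1000000

variable {A M N : Type*} [Ring A] [AddCommGroup M] [Module A M] [AddCommGroup N] [Module A N]
variable (𝒜 : ℤ → AddSubgroup A) [GradedRing 𝒜]
variable (ℳ : ℤ → AddSubgroup M) [Decomposition ℳ]
variable (𝒩 : ℤ → AddSubgroup N) [Decomposition 𝒩]

lemma key_smul (hN : IsGradedSMul 𝒜 𝒩) {k : ℤ} {a : A} (ha : a ∈ 𝒜 k) (n : N) (l : ℤ) :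
    (decompose 𝒩 (a • n) (k + l) : N) = a • (decompose 𝒩 n l : N) := by
  induction n using DirectSum.Decomposition.inductionOn 𝒩 with
  | zero => simp
  | @homogeneous j n =>
      obtain ⟨n, hn⟩ := n
      by_cases h : l = j
      · subst h
        rw [decompose_of_mem_same 𝒩 hn, decompose_of_mem_same 𝒩 (hN ha hn)]
      · rw [decompose_of_mem_ne 𝒩 hn (Ne.symm h),
          decompose_of_mem_ne 𝒩 (hN ha hn) (show (k+j : ℤ) ≠ k+l by omega), smul_zero]
  | add x y hx hy =>
      rw [smul_add, decompose_add, decompose_add, DirectSum.add_apply, DirectSum.add_apply,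
        AddSubgroup.coe_add, AddSubgroup.coe_add, hx, hy, smul_add]

/-- The `i`-th homogeneous component of `φ`, as an additive map. -/
noncomputable def homComp (φ : M →ₗ[A] N) (i : ℤ) : M →+ N :=
  (DirectSum.toAddMonoid (fun j : ℤ => {
      toFun := fun x : ℳ j => (decompose 𝒩 (φ (x : M)) (j + i) : N)
      map_zero' := by simp
      map_add' := by intro x y; simp })).comp
    (decomposeAddEquiv ℳ : M ≃+ ⨁ j, ℳ j).toAddMonoidHom

lemma homComp_apply_of_mem (φ : M →ₗ[A] N) (i : ℤ) {j : ℤ} {m : M} (hm : m ∈ ℳ j) :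
    homComp ℳ 𝒩 φ i m = (decompose 𝒩 (φ m) (j + i) : N) := by
  simp only [homComp, AddMonoidHom.comp_apply, AddEquiv.toAddMonoidHom_eq_coe,
    AddMonoidHom.coe_coe, decomposeAddEquiv_apply, decompose_of_mem ℳ hm,
    DirectSum.toAddMonoid_of, AddMonoidHom.coe_mk, ZeroHom.coe_mk]

end Aux

section Aux2
set_option synthInstance.maxHeartbeats 1000000
set_option maxHeartbeats 1000000
set_option linter.unusedSectionVars false

variable {A M N : Type*} [Ring A] [AddCommGroup M] [Module A M] [AddCommGroup N] [Module A N]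
variable (𝒜 : ℤ → AddSubgroup A) [GradedRing 𝒜]
variable (ℳ : ℤ → AddSubgroup M) [Decomposition ℳ]
variable (𝒩 : ℤ → AddSubgroup N) [Decomposition 𝒩]

lemma homComp_smul (hM : IsGradedSMul 𝒜 ℳ) (hN : IsGradedSMul 𝒜 𝒩)
    (φ : M →ₗ[A] N) (i : ℤ) (a : A) (m : M) :
    homComp ℳ 𝒩 φ i (a • m) = a • homComp ℳ 𝒩 φ i m := by
  induction m using DirectSum.Decomposition.inductionOn ℳ with
  | zero => simp
  | @homogeneous j m =>
      obtain ⟨m, hm⟩ := m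
      induction a using DirectSum.Decomposition.inductionOn 𝒜 with
      | zero => simp
      | @homogeneous k a =>
          obtain ⟨a, ha⟩ := a
          rw [homComp_apply_of_mem ℳ 𝒩 φ i hm, homComp_apply_of_mem ℳ 𝒩 φ i (hM ha hm),
            map_smul, show (k + j + i : ℤ) = k + (j + i) by ring, key_smul 𝒜 𝒩 hN ha]
      | add a b hadd hbdd =>
          rw [add_smul, map_add, hadd, hbdd, add_smul]
  | add x y hx hy =>
      rw [smul_add, map_add, hx, hy, map_add, smul_add]

/-- The `i`-th homogeneous component of `φ`, as a linear map. -/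
noncomputable def homCompₗ (hM : IsGradedSMul 𝒜 ℳ) (hN : IsGradedSMul 𝒜 𝒩)
    (φ : M →ₗ[A] N) (i : ℤ) : M →ₗ[A] N :=
  { homComp ℳ 𝒩 φ i with
    map_smul' := homComp_smul 𝒜 ℳ 𝒩 hM hN φ i }

lemma homCompₗ_apply_of_mem (hM : IsGradedSMul 𝒜 ℳ) (hN : IsGradedSMul 𝒜 𝒩)
    (φ : M →ₗ[A] N) (i : ℤ) {j : ℤ} {m : M} (hm : m ∈ ℳ j) :
    homCompₗ 𝒜 ℳ 𝒩 hM hN φ i m = (decompose 𝒩 (φ m) (j + i) : N) :=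
  homComp_apply_of_mem ℳ 𝒩 φ i hm

lemma decompose_homCompₗ (hM : IsGradedSMul 𝒜 ℳ) (hN : IsGradedSMul 𝒜 𝒩)
    (φ : M →ₗ[A] N) (i : ℤ) (m : M) (d : ℤ) :
    (decompose 𝒩 (homCompₗ 𝒜 ℳ 𝒩 hM hN φ i m) d : N)
      = homCompₗ 𝒜 ℳ 𝒩 hM hN φ i (decompose ℳ m (d - i) : M) := by
  induction m using DirectSum.Decomposition.inductionOn ℳ with
  | zero => simp
  | @homogeneous j m =>
      obtain ⟨m, hm⟩ := m
      have h1 : homCompₗ 𝒜 ℳ 𝒩 hM hN φ i m ∈ 𝒩 (j + i) := by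
        rw [homCompₗ_apply_of_mem 𝒜 ℳ 𝒩 hM hN φ i hm]; exact SetLike.coe_mem _
      by_cases h : d = j + i
      · subst h
        rw [decompose_of_mem_same 𝒩 h1, show (j + i - i : ℤ) = j by ring,
          decompose_of_mem_same ℳ hm]
      · rw [decompose_of_mem_ne 𝒩 h1 (by omega),
          decompose_of_mem_ne ℳ hm (show (j : ℤ) ≠ d - i by omega), map_zero]
  | add x y hx hy =>
      rw [map_add, decompose_add, decompose_add, DirectSum.add_apply, DirectSum.add_apply,
        AddSubgroup.coe_add, AddSubgroup.coe_add, hx, hy, map_add]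

end Aux2

/-- **A surjection onto a graded simple module has a surjective homogeneous
component.**  Let `A` be a `ℤ`-graded left-artinian ring, `M`, `N` graded
`A`-modules of finite length with `N` graded-simple.  If `φ : M → N` is a
surjective `A`-linear map (not necessarily graded), then some homogeneous
component `φᵢ : M → N(i)` of `φ` is a surjective morphism of graded modules. -/
theorem exists_surjective_homogeneous_component
    {A : Type*} [Ring A] [IsArtinian A A]
    (𝒜 : ℤ → AddSubgroup A) [GradedRing 𝒜]
    {M N : Type*} [AddCommGroup M] [Module A M] [AddCommGroup N] [Module A N]
    (ℳ : ℤ → AddSubgroup M) [DirectSum.Decomposition ℳ] (hM : IsGradedSMul 𝒜 ℳ)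
    (𝒩 : ℤ → AddSubgroup N) [DirectSum.Decomposition 𝒩] (hN : IsGradedSMul 𝒜 𝒩)
    (hMfl : IsFiniteLength A M) (hNfl : IsFiniteLength A N)
    (hNsimple : IsGradedSimpleModule A 𝒩)
    (φ : M →ₗ[A] N) (hφ : Function.Surjective φ) :
    ∃ (i : ℤ) (ψ : M →ₗ[A] N),
      (∀ j : ℤ, ∀ x ∈ ℳ j, ψ x ∈ 𝒩 (j + i)) ∧
      Function.Surjective ψ ∧
      (∀ j : ℤ, ∀ x ∈ ℳ j, ψ x = (DirectSum.decompose 𝒩 (φ x) (j + i) : N)) := by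
  classical
  have hnz : ∃ (i : ℤ) (m : M), homCompₗ 𝒜 ℳ 𝒩 hM hN φ i m ≠ 0 := by
    by_contra h
    push_neg at h
    have hφ0 : ∀ m, φ m = 0 := by
      intro m
      induction m using DirectSum.Decomposition.inductionOn ℳ with
      | zero => simp
      | @homogeneous j m =>
          obtain ⟨m, hm⟩ := m
          have hc : ∀ d : ℤ, (decompose 𝒩 (φ m) d : N) = 0 := by
            intro d
            have hd := h (d - j) m
            rwa [homCompₗ_apply_of_mem 𝒜 ℳ 𝒩 hM hN φ (d - j) hm,
              show (j + (d - j) : ℤ) = d by ring] at hd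
          have hdec : decompose 𝒩 (φ m) = decompose 𝒩 0 := by
            rw [decompose_zero]
            refine DFinsupp.ext fun d => ?_
            simpa using hc d
          exact (decompose 𝒩).injective hdec
      | add x y hx hy => rw [map_add, hx, hy, add_zero]
    haveI : Nontrivial N := hNsimple.1
    obtain ⟨n, hn⟩ := exists_ne (0 : N)
    obtain ⟨m, rfl⟩ := hφ n
    exact hn (hφ0 m)
  obtain ⟨i, m0, hm0⟩ := hnz
  set ψ := homCompₗ 𝒜 ℳ 𝒩 hM hN φ i with hψ
  have hgr : ∀ (j : ℤ), ∀ x ∈ LinearMap.range ψ, (decompose 𝒩 x j : N) ∈ LinearMap.range ψ := by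
    intro d x hx
    obtain ⟨m, rfl⟩ := hx
    exact ⟨(decompose ℳ m (d - i) : M), (decompose_homCompₗ 𝒜 ℳ 𝒩 hM hN φ i m d).symm⟩
  rcases hNsimple.2 (LinearMap.range ψ) hgr with hbot | htop
  · exfalso
    have hb : ψ m0 ∈ (⊥ : Submodule A N) := hbot ▸ LinearMap.mem_range_self ψ m0
    exact hm0 (by simpa using hb)
  · refine ⟨i, ψ, ?_, LinearMap.range_eq_top.mp htop, ?_⟩
    · intro j x hx
      rw [hψ, homCompₗ_apply_of_mem 𝒜 ℳ 𝒩 hM hN φ i hx]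
      exact SetLike.coe_mem _
    · intro j x hx
      exact homCompₗ_apply_of_mem 𝒜 ℳ 𝒩 hM hN φ i hx
end

section
/- Let A be a ℤ-graded left-artinian ring and M an indecomposable finite-length A-module. If M admits two ℤ-gradings compatible with the A-module structure, then the two graded modules are isomorphic up to a shift of the grading. -/
set_option synthInstance.maxHeartbeats 1000000
set_option maxHeartbeats 1000000
namespace GradUniq

open DirectSum

variable {A M : Type*} [Ring A] [AddCommGroup M] [Module A M]

/-- projection onto the `i`-th piece of the grading `𝒩`. -/
noncomputable def pr (𝒩 : ℤ → AddSubgroup M) [DirectSum.Decomposition 𝒩] (i : ℤ) : M →+ M :=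
  ((𝒩 i).subtype).comp ((DFinsupp.evalAddMonoidHom i).comp
    (decomposeAddEquiv 𝒩).toAddMonoidHom)

lemma pr_apply (𝒩 : ℤ → AddSubgroup M) [DirectSum.Decomposition 𝒩] (i : ℤ) (x : M) :
    pr 𝒩 i x = (decompose 𝒩 x i : M) := rfl

/-- the degree-`d` component of the identity map, from grading `ℳ` to grading `𝒩`. -/
noncomputable def fc (ℳ 𝒩 : ℤ → AddSubgroup M) [DirectSum.Decomposition ℳ]
    [DirectSum.Decomposition 𝒩] (d : ℤ) : M →+ M :=
  (DirectSum.toAddMonoid (fun j => (pr 𝒩 (j + d)).comp (ℳ j).subtype)).comp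
    (decomposeAddEquiv ℳ).toAddMonoidHom

variable (ℳ 𝒩 : ℤ → AddSubgroup M) [DirectSum.Decomposition ℳ] [DirectSum.Decomposition 𝒩]

lemma fc_of_mem {j d : ℤ} {x : M} (hx : x ∈ ℳ j) : fc ℳ 𝒩 d x = pr 𝒩 (j + d) x := by
  have h : decompose ℳ x = DirectSum.of (fun i => ℳ i) j ⟨x, hx⟩ := decompose_of_mem ℳ hx
  show (DirectSum.toAddMonoid _) (decompose ℳ x) = _
  rw [h, DirectSum.toAddMonoid_of]
  rfl

lemma pr_smul (𝒜 : ℤ → AddSubgroup A) (h𝒩 : IsGradedSMul 𝒜 𝒩) {i : ℤ} {a : A} (ha : a ∈ 𝒜 i)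
    (k : ℤ) (x : M) : pr 𝒩 (i + k) (a • x) = a • pr 𝒩 k x := by
  induction x using DirectSum.Decomposition.inductionOn (ℳ := 𝒩) with
  | zero => simp
  | @homogeneous l m =>
    rcases m with ⟨x, hx⟩
    by_cases h : l = k
    · subst h
      rw [pr_apply, pr_apply, decompose_of_mem_same 𝒩 hx, decompose_of_mem_same 𝒩 (h𝒩 ha hx)]
    · rw [pr_apply, pr_apply, decompose_of_mem_ne 𝒩 hx h, smul_zero,
        decompose_of_mem_ne 𝒩 (h𝒩 ha hx) (by omega)]
  | add m m' hm hm' => rw [smul_add, map_add, map_add, hm, hm', smul_add]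

lemma fc_smul (𝒜 : ℤ → AddSubgroup A) [GradedRing 𝒜] (hℳ : IsGradedSMul 𝒜 ℳ)
    (h𝒩 : IsGradedSMul 𝒜 𝒩) (d : ℤ) (a : A) (x : M) :
    fc ℳ 𝒩 d (a • x) = a • fc ℳ 𝒩 d x := by
  induction a using DirectSum.Decomposition.inductionOn (ℳ := 𝒜) with
  | zero => simp
  | @homogeneous i b =>
    rcases b with ⟨a, ha⟩
    induction x using DirectSum.Decomposition.inductionOn (ℳ := ℳ) with
    | zero => simp
    | @homogeneous j m =>
      rcases m with ⟨x, hx⟩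
      rw [fc_of_mem ℳ 𝒩 hx, fc_of_mem ℳ 𝒩 (hℳ ha hx), add_assoc,
        pr_smul 𝒩 𝒜 h𝒩 ha]
    | add m m' hm hm' => rw [smul_add, map_add, map_add, hm, hm', smul_add]
  | add b b' hb hb' => rw [add_smul, map_add, hb, hb', add_smul]

lemma fc_support (x : M) :
    ∃ T : Finset ℤ, (∀ d ∉ T, fc ℳ 𝒩 d x = 0) ∧ ∑ d ∈ T, fc ℳ 𝒩 d x = x := by
  classical
  induction x using DirectSum.Decomposition.inductionOn (ℳ := ℳ) with
  | zero => exact ⟨∅, fun d _ => map_zero _, by simp⟩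
  | @homogeneous j m =>
    rcases m with ⟨x, hx⟩
    refine ⟨(DFinsupp.support (decompose 𝒩 x)).image (fun i => i - j), ?_, ?_⟩
    · intro d hd
      have hns : j + d ∉ DFinsupp.support (decompose 𝒩 x) := by
        intro hmem
        exact hd (Finset.mem_image.mpr ⟨j + d, hmem, by ring⟩)
      have h0 : decompose 𝒩 x (j + d) = 0 := DFinsupp.notMem_support_iff.mp hns
      rw [fc_of_mem ℳ 𝒩 hx, pr_apply, h0, ZeroMemClass.coe_zero]
    · rw [Finset.sum_image (by intro a _ b _ h; simp only at h; omega)]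
      have hcg : ∀ i ∈ DFinsupp.support (decompose 𝒩 x),
          fc ℳ 𝒩 (i - j) x = (decompose 𝒩 x i : M) := by
        intro i _
        rw [fc_of_mem ℳ 𝒩 hx, pr_apply]
        have : j + (i - j) = i := by ring
        rw [this]
      rw [Finset.sum_congr rfl hcg]
      exact DirectSum.sum_support_decompose 𝒩 x
  | add m m' hm hm' =>
    obtain ⟨T, hT0, hTs⟩ := hm
    obtain ⟨T', hT0', hTs'⟩ := hm'
    refine ⟨T ∪ T', fun d hd => ?_, ?_⟩
    · rw [map_add, hT0 d (fun h => hd (Finset.mem_union_left _ h)),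
        hT0' d (fun h => hd (Finset.mem_union_right _ h)), add_zero]
    · rw [Finset.sum_congr rfl (fun d _ => map_add (fc ℳ 𝒩 d) m m'),
        Finset.sum_add_distrib,
        ← Finset.sum_subset Finset.subset_union_left (fun d _ hd => hT0 d hd),
        ← Finset.sum_subset Finset.subset_union_right (fun d _ hd => hT0' d hd),
        hTs, hTs']

end GradUniq


lemma GradUniq.isUnit_or_of_isUnit_add {R : Type*} [Semiring R] [IsLocalRing R] {a b : R}
    (h : IsUnit (a + b)) : IsUnit a ∨ IsUnit b := by
  rcases h with ⟨u, hu⟩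
  have h1 : a * ↑u⁻¹ + b * ↑u⁻¹ = 1 := by
    rw [← add_mul, ← hu, Units.mul_inv]
  rcases IsLocalRing.isUnit_or_isUnit_of_add_one h1 with h | h
  · left; have := h.mul u.isUnit; rwa [Units.inv_mul_cancel_right] at this
  · right; have := h.mul u.isUnit; rwa [Units.inv_mul_cancel_right] at this

set_option maxHeartbeats 1000000 in
set_option synthInstance.maxHeartbeats 1000000 in
/-- **Uniqueness of gradings on indecomposable modules.**
Let `A` be a `ℤ`-graded left-artinian ring and `M` an indecomposable `A`-module
of finite length.  If `ℳ` and `𝒩` are two `ℤ`-gradings of `M` compatible with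
the module structure, then the two graded modules are isomorphic up to a shift
of the grading: there are `i : ℤ` and an `A`-linear automorphism `e` of `M`
carrying `ℳ j` into `𝒩 (i + j)` for all `j`. -/
theorem gradings_on_indecomposable_iso_up_to_shift
    {A : Type*} [Ring A] [IsArtinian A A]
    (𝒜 : ℤ → AddSubgroup A) [GradedRing 𝒜]
    {M : Type*} [AddCommGroup M] [Module A M]
    (hfl : IsFiniteLength A M) (hM : Nontrivial M)
    (hind : ∀ p q : Submodule A M, IsCompl p q → p = ⊥ ∨ q = ⊥)
    (ℳ : ℤ → AddSubgroup M) [DirectSum.Decomposition ℳ] (hℳ : IsGradedSMul 𝒜 ℳ)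
    (𝒩 : ℤ → AddSubgroup M) [DirectSum.Decomposition 𝒩] (h𝒩 : IsGradedSMul 𝒜 𝒩) :
    ∃ (i : ℤ) (e : M ≃ₗ[A] M), ∀ (j : ℤ), ∀ x ∈ ℳ j, e x ∈ 𝒩 (i + j) := by
  classical
  obtain ⟨hNoe, hArt⟩ := isFiniteLength_iff_isNoetherian_isArtinian.mp hfl
  -- the degree-`d` components of the identity, as `A`-linear endomorphisms
  set F : ℤ → Module.End A M := fun d =>
    { toFun := GradUniq.fc ℳ 𝒩 d
      map_add' := fun x y => map_add _ x y
      map_smul' := fun a x => GradUniq.fc_smul ℳ 𝒩 𝒜 hℳ h𝒩 d a x } with hF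
  -- `End A M` is a local ring (Fitting + indecomposability)
  have hloc : ∀ g : Module.End A M, IsUnit g ∨ IsUnit (1 - g) := by
    intro g
    obtain ⟨n, hn⟩ := Filter.eventually_atTop.mp
      (LinearMap.eventually_isCompl_ker_pow_range_pow (g : M →ₗ[A] M))
    have hc := hn (n + 1) (Nat.le_succ n)
    rcases hind _ _ hc with hker | hrng
    · left
      rw [Module.End.isUnit_iff]
      constructor
      · intro x y hxy
        have hinj : Function.Injective (g ^ (n + 1)) := LinearMap.ker_eq_bot.mp hker
        have : (g ^ (n + 1)) x = (g ^ (n + 1)) y := by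
          rw [pow_succ, Module.End.mul_apply, Module.End.mul_apply, hxy]
        exact hinj this
      · intro y
        have htop : LinearMap.range (g ^ (n + 1)) = ⊤ := by
          have := hc.sup_eq_top
          rwa [hker, bot_sup_eq] at this
        have hsurj : Function.Surjective (g ^ (n + 1)) := LinearMap.range_eq_top.mp htop
        obtain ⟨x, hx⟩ := hsurj y
        exact ⟨(g ^ n) x, by rw [← Module.End.mul_apply, ← pow_succ'] ; exact hx⟩
    · right
      have hnil : g ^ (n + 1) = 0 := LinearMap.range_eq_bot.mp hrng
      exact IsNilpotent.isUnit_one_sub ⟨n + 1, hnil⟩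
  haveI : Nontrivial (Module.End A M) := by
    obtain ⟨x, hx⟩ := exists_ne (0 : M)
    exact ⟨1, 0, fun h => hx (by simpa using LinearMap.congr_fun h x)⟩
  haveI : IsLocalRing (Module.End A M) :=
    ⟨fun {a b} hab => (hloc a).imp id fun h => by
      rwa [show (1 : Module.End A M) - a = b by rw [← hab, add_sub_cancel_left]] at h⟩
  -- generators
  obtain ⟨s, hs⟩ := IsNoetherian.noetherian (⊤ : Submodule A M)
  choose T hT0 hTsum using GradUniq.fc_support ℳ 𝒩
  set S : Finset ℤ := s.biUnion T with hS
  have h1 : ∀ d, d ∉ S → F d = 0 := by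
    intro d hd
    have hker : (⊤ : Submodule A M) ≤ LinearMap.ker (F d) := by
      rw [← hs]
      refine Submodule.span_le.mpr fun x hx => ?_
      have : x ∈ s := hx
      exact LinearMap.mem_ker.mpr (hT0 x d fun h => hd (Finset.mem_biUnion.mpr ⟨x, this, h⟩))
    ext x
    exact LinearMap.mem_ker.mp (hker Submodule.mem_top)
  have h2 : (∑ d ∈ S, F d) = 1 := by
    ext x
    have e1 : ∑ d ∈ S, F d x = ∑ d ∈ S ∪ T x, F d x :=
      Finset.sum_subset Finset.subset_union_left
        (fun d _ hd => by rw [h1 d hd]; rfl)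
    have e2 : ∑ d ∈ T x, F d x = ∑ d ∈ S ∪ T x, F d x :=
      Finset.sum_subset Finset.subset_union_right (fun d _ hd => hT0 x d hd)
    have e3 : ∑ d ∈ T x, F d x = x := hTsum x
    show (∑ d ∈ S, F d) x = x
    rw [LinearMap.sum_apply]
    rw [e1, ← e2, e3]
  have h3 : ∃ d ∈ S, IsUnit (F d) := by
    by_contra hcon
    push_neg at hcon
    have hsum : (∑ d ∈ S, F d) ∈ nonunits (Module.End A M) := by
      refine Finset.sum_induction F (fun g => g ∈ nonunits _)
        (fun a b ha hb hu => ?_) not_isUnit_zero fun d hd => hcon d hd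
      rcases GradUniq.isUnit_or_of_isUnit_add hu with h | h
      · exact ha h
      · exact hb h
    rw [h2] at hsum
    exact hsum isUnit_one
  obtain ⟨d, _, hd⟩ := h3
  refine ⟨d, LinearEquiv.ofBijective (F d) (Module.End.isUnit_iff (F d) |>.mp hd), ?_⟩
  intro j x hx
  have heq : (LinearEquiv.ofBijective (F d) (Module.End.isUnit_iff (F d) |>.mp hd)) x
      = (DirectSum.decompose 𝒩 x (j + d) : M) := by
    show F d x = _
    show GradUniq.fc ℳ 𝒩 d x = _
    rw [GradUniq.fc_of_mem ℳ 𝒩 hx, GradUniq.pr_apply]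
  rw [heq, add_comm d j]
  exact SetLike.coe_mem _
end

section
/- Let S = S(𝔥) be the symmetric algebra of a finite-dimensional complex vector space 𝔥 with an action of a finite group W by linear automorphisms, let λ ⊂ S be a maximal ideal with isotropy group W_λ, and let Y = S^{W_λ}. Then the natural map from the completion of Y at μ = λ ∩ Y to the W_λ-invariants of the completion of S at λ is an isomorphism: Y^∧_μ ≅ (S^∧_λ)^{W_λ}. -/
set_option synthInstance.maxHeartbeats 1000000
set_option maxHeartbeats 1000000

/-- The `I`-adic completion of `R`, realized concretely as compatible sequences
in the quotients `R ⧸ Iⁿ`. -/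
def Cmpl {R : Type*} [CommRing R] (I : Ideal R) : Type _ :=
  { s : ∀ n : ℕ, R ⧸ I ^ n //
    ∀ (n : ℕ) (x : R), Ideal.Quotient.mk (I ^ (n + 1)) x = s (n + 1) →
      Ideal.Quotient.mk (I ^ n) x = s n }

/-- The subring of invariants under the isotropy group of a maximal ideal `l`:
elements fixed by every `w` stabilizing `l`. -/
def isotropyInvariants (W : Type*) [Group W] {S : Type*} [CommRing S]
    [MulSemiringAction W S] (l : Ideal S) : Subring S where
  carrier := {x | ∀ w : W, (∀ a ∈ l, w • a ∈ l) → w • x = x}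
  zero_mem' := fun w _ => smul_zero w
  one_mem' := fun w _ => smul_one w
  add_mem' := fun hx hy w hw => by rw [smul_add, hx w hw, hy w hw]
  mul_mem' := fun hx hy w hw => by rw [smul_mul', hx w hw, hy w hw]
  neg_mem' := fun hx w hw => by rw [smul_neg, hx w hw]

open scoped Classical

set_option linter.unusedSectionVars false
set_option linter.unusedVariables false

section Aux

variable (W : Type*) [Group W] [Fintype W] {S : Type*} [CommRing S] [Algebra ℂ S]
  [MulSemiringAction W S] [SMulCommClass W ℂ S] (l : Ideal S)

/-- The isotropy subgroup of an ideal. -/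
def isoGrp : Subgroup W where
  carrier := {w | ∀ a ∈ l, w • a ∈ l}
  one_mem' := fun a ha => by simpa using ha
  mul_mem' := fun {v w} hv hw a ha => by rw [mul_smul]; exact hv _ (hw a ha)
  inv_mem' := fun {w} hw a ha => by
    have hpow : ∀ (k : ℕ) (b : S), b ∈ l → w ^ k • b ∈ l := by
      intro k
      induction k with
      | zero => intro b hb; simpa using hb
      | succ k ih => intro b hb; rw [pow_succ, mul_smul]; exact ih _ (hw _ hb)
    have hn : 0 < orderOf w := orderOf_pos w
    have ha' : a = w • (w ^ (orderOf w - 1) • a) := by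
      rw [← mul_smul, ← pow_succ', Nat.sub_add_cancel hn, pow_orderOf_eq_one, one_smul]
    rw [ha', inv_smul_smul]
    exact hpow _ _ ha

lemma mem_isoGrp {w : W} : w ∈ isoGrp W l ↔ ∀ a ∈ l, w • a ∈ l := Iff.rfl

lemma mem_isotropyInvariants_iff {x : S} :
    x ∈ isotropyInvariants W l ↔ ∀ w ∈ isoGrp W l, w • x = x := Iff.rfl

end Aux

section Aux2
variable (W : Type*) [Group W] [Fintype W] {S : Type*} [CommRing S] [Algebra ℂ S]
  [MulSemiringAction W S] [SMulCommClass W ℂ S] (l : Ideal S)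

/-- Reynolds operator for the isotropy subgroup. -/
noncomputable def Rey (x : S) : S :=
  (Fintype.card (isoGrp W l) : ℂ)⁻¹ • ∑ w : isoGrp W l, (w : W) • x

lemma rey_mem (x : S) : Rey W l x ∈ isotropyInvariants W l := by
  intro v hv
  unfold Rey
  rw [smul_comm, Finset.smul_sum]
  congr 1
  refine Fintype.sum_equiv (Equiv.mulLeft (⟨v, hv⟩ : isoGrp W l)) _ _ (fun w => ?_)
  simp [mul_smul]

lemma card_isoGrp_ne_zero : ((Fintype.card (isoGrp W l) : ℂ)) ≠ 0 := by
  exact_mod_cast Fintype.card_ne_zero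

lemma rey_fix (x : S) (hx : x ∈ isotropyInvariants W l) : Rey W l x = x := by
  unfold Rey
  have : ∀ w : isoGrp W l, (w : W) • x = x := fun w => hx w w.2
  rw [Finset.sum_congr rfl (fun w _ => this w), Finset.sum_const, Finset.card_univ,
    ← Nat.cast_smul_eq_nsmul ℂ, smul_smul, inv_mul_cancel₀ (card_isoGrp_ne_zero W l), one_smul]

lemma rey_mul_inv (y x : S) (hy : y ∈ isotropyInvariants W l) :
    Rey W l (y * x) = y * Rey W l x := by
  unfold Rey
  rw [mul_smul_comm, Finset.mul_sum]
  congr 1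
  refine Finset.sum_congr rfl (fun w _ => ?_)
  rw [smul_mul', hy w w.2]

lemma rey_add (x y : S) : Rey W l (x + y) = Rey W l x + Rey W l y := by
  unfold Rey
  rw [← smul_add, ← Finset.sum_add_distrib]
  congr 1
  exact Finset.sum_congr rfl fun w _ => smul_add _ _ _

lemma rey_zero : Rey W l 0 = 0 := by
  unfold Rey; simp

end Aux2

section Aux3
variable (W : Type*) [Group W] [Fintype W] {S : Type*} [CommRing S] [Nontrivial S]
  [Algebra ℂ S] [MulSemiringAction W S] [SMulCommClass W ℂ S] (l : Ideal S)

lemma rey_map (J : Ideal (isotropyInvariants W l)) (x : S)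
    (hx : x ∈ Ideal.map (isotropyInvariants W l).subtype J) :
    ∃ z : isotropyInvariants W l, z ∈ J ∧ (z : S) = Rey W l x := by
  have key : ∀ (y : S), y ∈ Ideal.map (isotropyInvariants W l).subtype J →
      ∀ s : S, ∃ z : isotropyInvariants W l, z ∈ J ∧ (z : S) = Rey W l (s * y) := by
    intro y hy
    refine Submodule.span_induction
      (p := fun y _ => ∀ s : S, ∃ z : isotropyInvariants W l, z ∈ J ∧ (z : S) = Rey W l (s * y))
      ?_ ?_ ?_ ?_ hy
    · rintro _ ⟨z, hz, rfl⟩ s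
      refine ⟨z * ⟨Rey W l s, rey_mem W l s⟩, J.mul_mem_right _ hz, ?_⟩
      rw [Subring.coe_mul]
      show _ = Rey W l (s * (z : S))
      rw [mul_comm s, rey_mul_inv W l _ s z.2]
    · intro s; exact ⟨0, J.zero_mem, by rw [mul_zero, rey_zero]; rfl⟩
    · intro a b _ _ ha hb s
      obtain ⟨z1, hz1, e1⟩ := ha s
      obtain ⟨z2, hz2, e2⟩ := hb s
      exact ⟨z1 + z2, J.add_mem hz1 hz2, by
        rw [mul_add, rey_add, ← e1, ← e2, Subring.coe_add]⟩
    · intro a y _ hy s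
      obtain ⟨z, hz, e⟩ := hy (s * a)
      refine ⟨z, hz, ?_⟩
      rw [smul_eq_mul, ← mul_assoc]
      exact e
  obtain ⟨z, hz, e⟩ := key x hx 1
  rw [one_mul] at e
  exact ⟨z, hz, e⟩

lemma pow_card_mem (x : S) (hx : x ∈ l) :
    x ^ Fintype.card (isoGrp W l) ∈ Ideal.map (isotropyInvariants W l).subtype
      (Ideal.comap (isotropyInvariants W l).subtype l) := by
  classical
  set H := isoGrp W l with hH
  set h := Fintype.card H with hh
  set F : Polynomial S := ∏ w : H, (Polynomial.X - Polynomial.C ((w : W) • x)) with hF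
  have hmonic : F.Monic :=
    Polynomial.monic_prod_of_monic _ _ fun w _ => Polynomial.monic_X_sub_C _
  have hdeg : F.natDegree = h := by
    rw [hF, Polynomial.natDegree_prod_of_monic _ _ fun w _ => Polynomial.monic_X_sub_C _]
    simp [hh]
  have heval : F.eval x = 0 := by
    rw [hF, Polynomial.eval_prod]
    refine Finset.prod_eq_zero (Finset.mem_univ (1 : H)) ?_
    simp
  have hcoeff_l : ∀ i, i ≠ h → F.coeff i ∈ l := by
    intro i hi
    have hmap : F.map (Ideal.Quotient.mk l) = Polynomial.X ^ h := by
      rw [hF, Polynomial.map_prod]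
      have heach : ∀ w : H, (Polynomial.X - Polynomial.C ((w : W) • x)).map
          (Ideal.Quotient.mk l) = Polynomial.X := by
        intro w
        rw [Polynomial.map_sub, Polynomial.map_X, Polynomial.map_C,
          Ideal.Quotient.eq_zero_iff_mem.2 (w.2 x hx), Polynomial.C_0, sub_zero]
      rw [Finset.prod_congr rfl fun w _ => heach w, Finset.prod_const, Finset.card_univ, hh]
    have := Polynomial.coeff_map (Ideal.Quotient.mk l) i (p := F)
    rw [hmap, Polynomial.coeff_X_pow, if_neg hi] at this
    exact Ideal.Quotient.eq_zero_iff_mem.1 this.symm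
  have hcoeff_Y : ∀ i, F.coeff i ∈ isotropyInvariants W l := by
    intro i v hv
    have h2 : v • F.coeff i = (F.map (MulSemiringAction.toRingHom W S v)).coeff i := by
      rw [Polynomial.coeff_map]; rfl
    have h3 : F.map (MulSemiringAction.toRingHom W S v) = F := by
      rw [hF, Polynomial.map_prod]
      refine Fintype.prod_equiv (Equiv.mulLeft (⟨v, hv⟩ : H)) _ _ fun w => ?_
      rw [Polynomial.map_sub, Polynomial.map_X, Polynomial.map_C]
      congr 2
      show v • ((w : W) • x) = _
      rw [← mul_smul]
      rfl
    rw [h2, h3]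
  have hx_eval := Polynomial.eval_eq_sum_range (p := F) x
  rw [heval, hdeg, Finset.sum_range_succ] at hx_eval
  have hch : F.coeff h = 1 := by rw [← hdeg]; exact hmonic.coeff_natDegree
  rw [hch, one_mul] at hx_eval
  have hxh : x ^ h = -∑ i ∈ Finset.range h, F.coeff i * x ^ i :=
    eq_neg_of_add_eq_zero_right hx_eval.symm
  rw [hxh]
  refine neg_mem (Ideal.sum_mem _ fun i hi => ?_)
  have hFi : F.coeff i ∈ l := hcoeff_l i (Nat.ne_of_lt (Finset.mem_range.1 hi))
  have hmem : F.coeff i ∈ Ideal.map (isotropyInvariants W l).subtype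
      (Ideal.comap (isotropyInvariants W l).subtype l) :=
    Ideal.mem_map_of_mem _ (show (⟨F.coeff i, hcoeff_Y i⟩ : isotropyInvariants W l) ∈
      Ideal.comap (isotropyInvariants W l).subtype l from hFi)
  exact Ideal.mul_mem_right _ _ hmem

end Aux3

section Aux4
variable (W : Type*) [Group W] [Fintype W] {S : Type*} [CommRing S] [Nontrivial S]
  [Algebra ℂ S] [MulSemiringAction W S] [SMulCommClass W ℂ S] (l : Ideal S)

lemma crux (hfg : l.FG) :
    ∃ k : ℕ, 0 < k ∧ ∀ n : ℕ, ∀ y : isotropyInvariants W l,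
      (y : S) ∈ l ^ (k * n) → y ∈ (Ideal.comap (isotropyInvariants W l).subtype l) ^ n := by
  have hrad : l ≤ (Ideal.map (isotropyInvariants W l).subtype
      (Ideal.comap (isotropyInvariants W l).subtype l)).radical := fun x hx =>
    ⟨Fintype.card (isoGrp W l), pow_card_mem W l x hx⟩
  obtain ⟨k0, hk0⟩ := Ideal.exists_pow_le_of_le_radical_of_fg hrad hfg
  refine ⟨k0 + 1, Nat.succ_pos _, fun n y hy => ?_⟩
  have h1 : (y : S) ∈ Ideal.map (isotropyInvariants W l).subtype
      ((Ideal.comap (isotropyInvariants W l).subtype l) ^ n) := by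
    rw [Ideal.map_pow]
    have hle : l ^ ((k0 + 1) * n) ≤ (Ideal.map (isotropyInvariants W l).subtype
        (Ideal.comap (isotropyInvariants W l).subtype l)) ^ n := by
      calc l ^ ((k0 + 1) * n) = (l ^ (k0 + 1)) ^ n := by rw [← pow_mul]
        _ ≤ _ := Ideal.pow_right_mono
            (le_trans (Ideal.pow_le_pow_right (Nat.le_succ k0)) hk0) n
    exact hle hy
  obtain ⟨z, hz, e⟩ := rey_map W l _ _ h1
  have hzy : z = y := Subtype.ext (by rw [e, rey_fix W l _ y.2])
  rwa [← hzy]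

lemma coe_mem_pow (n : ℕ) (y : isotropyInvariants W l)
    (hy : y ∈ (Ideal.comap (isotropyInvariants W l).subtype l) ^ n) :
    (y : S) ∈ l ^ n := by
  have h1 : (y : S) ∈ Ideal.map (isotropyInvariants W l).subtype
      ((Ideal.comap (isotropyInvariants W l).subtype l) ^ n) := Ideal.mem_map_of_mem _ hy
  rw [Ideal.map_pow] at h1
  exact Ideal.pow_right_mono (Ideal.map_comap_le) n h1

lemma smul_mem_pow (w : W) (hw : ∀ a ∈ l, w • a ∈ l) (n : ℕ) :
    ∀ a ∈ l ^ n, w • a ∈ l ^ n := by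
  induction n with
  | zero => intro a _; simp
  | succ n ih =>
    intro a ha
    rw [pow_succ] at ha ⊢
    refine Submodule.mul_induction_on ha (fun m hm r hr => ?_) (fun b c hb hc => ?_)
    · rw [smul_mul']
      exact Ideal.mul_mem_mul (ih m hm) (hw r hr)
    · rw [smul_add]; exact add_mem hb hc

lemma cmpl_down {R : Type*} [CommRing R] {I : Ideal R} (t : Cmpl I) (x : R) :
    ∀ m n : ℕ, n ≤ m → Ideal.Quotient.mk (I ^ m) x = t.1 m →
      Ideal.Quotient.mk (I ^ n) x = t.1 n := by
  intro m
  induction m with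
  | zero => intro n hn h; rw [Nat.le_zero.1 hn]; exact h
  | succ m ih =>
    intro n hn h
    rcases Nat.lt_or_ge n (m + 1) with hlt | hge
    · exact ih n (Nat.lt_succ_iff.1 hlt) (t.2 m x h)
    · have : n = m + 1 := le_antisymm hn hge
      subst this; exact h

end Aux4

/-- **Invariants commute with completion.**
Let `S = Sym(𝔥) = ℂ[x₁,…,x_d]` be the symmetric algebra of a finite-dimensional
complex vector space with a finite group `W` acting by (ℂ-linear) algebra
automorphisms preserving the linear part, let `l ⊂ S` be a maximal ideal with
isotropy group `W_l`, `Y = S^{W_l}` and `μ = l ∩ Y`.  Then the natural map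
`Y^∧_μ → (S^∧_l)^{W_l}` is an isomorphism: any map `Φ` between the concrete
completions which is induced by the inclusion `Y ⊆ S` is injective with image
exactly the `W_l`-invariant elements of `S^∧_l`. -/
theorem completion_of_isotropy_invariants_bijective
    (d : ℕ) (W : Type*) [Group W] [Fintype W]
    [MulSemiringAction W (MvPolynomial (Fin d) ℂ)]
    [SMulCommClass W ℂ (MvPolynomial (Fin d) ℂ)]
    (hlin : ∀ (w : W) (p : MvPolynomial (Fin d) ℂ),
      p.IsHomogeneous 1 → (w • p).IsHomogeneous 1)
    (l : Ideal (MvPolynomial (Fin d) ℂ)) (hmax : l.IsMaximal)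
    (Φ : Cmpl (Ideal.comap (isotropyInvariants W l).subtype l) → Cmpl l)
    (hΦ : ∀ (t : Cmpl (Ideal.comap (isotropyInvariants W l).subtype l))
        (n : ℕ) (x : (isotropyInvariants W l)),
      Ideal.Quotient.mk ((Ideal.comap (isotropyInvariants W l).subtype l) ^ n) x
          = t.1 n →
      Ideal.Quotient.mk (l ^ n) (x : MvPolynomial (Fin d) ℂ) = (Φ t).1 n) :
    Function.Injective Φ ∧
    Set.range Φ = { s : Cmpl l |
      ∀ w : W, (∀ a ∈ l, w • a ∈ l) →
        ∀ (n : ℕ) (x : MvPolynomial (Fin d) ℂ),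
          Ideal.Quotient.mk (l ^ n) x = s.1 n →
          Ideal.Quotient.mk (l ^ n) (w • x) = s.1 n } := by
  classical
  obtain ⟨k, hk, hcrux⟩ := crux W l (IsNoetherian.noetherian l)
  have hnle : ∀ n : ℕ, n ≤ k * n := fun n => Nat.le_mul_of_pos_left n hk
  constructor
  · -- injectivity
    intro t t' h
    apply Subtype.ext; funext n
    obtain ⟨y, hy⟩ := Ideal.Quotient.mk_surjective (t.1 (k * n))
    obtain ⟨y', hy'⟩ := Ideal.Quotient.mk_surjective (t'.1 (k * n))
    have h1 := hΦ t (k * n) y hy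
    have h1' := hΦ t' (k * n) y' hy'
    rw [h] at h1
    have hsub : ((y - y' : isotropyInvariants W l) : MvPolynomial (Fin d) ℂ) ∈ l ^ (k * n) := by
      have h2 := h1.trans h1'.symm
      rw [Ideal.Quotient.eq] at h2
      push_cast
      exact h2
    have hμn := hcrux n _ hsub
    rw [← cmpl_down t y (k * n) n (hnle n) hy, ← cmpl_down t' y' (k * n) n (hnle n) hy',
      Ideal.Quotient.eq]
    exact hμn
  · ext s
    constructor
    · rintro ⟨t, rfl⟩ w hw n x hx
      obtain ⟨y, hy⟩ := Ideal.Quotient.mk_surjective (t.1 n)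
      have h1 := hΦ t n y hy
      have hdiff : x - (y : MvPolynomial (Fin d) ℂ) ∈ l ^ n := by
        rw [← Ideal.Quotient.eq] at *
        exact hx.trans h1.symm
      have h2 := smul_mem_pow W l w hw n _ hdiff
      rw [smul_sub, y.2 w hw] at h2
      rw [← h1, Ideal.Quotient.eq]
      exact h2
    · intro hs
      choose xl hxl using fun n => Ideal.Quotient.mk_surjective (s.1 n)
      have hem : ∀ n, Rey W l (xl n) ∈ isotropyInvariants W l := fun n => rey_mem W l (xl n)
      have heq : ∀ n, Rey W l (xl n) - xl n ∈ l ^ n := by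
        intro n
        have hsum : Rey W l (xl n) - xl n = (Fintype.card (isoGrp W l) : ℂ)⁻¹ •
            ∑ w : isoGrp W l, ((w : W) • xl n - xl n) := by
          simp only [Rey]
          rw [Finset.sum_sub_distrib, smul_sub, Finset.sum_const, Finset.card_univ,
            ← Nat.cast_smul_eq_nsmul ℂ, smul_smul,
            inv_mul_cancel₀ (card_isoGrp_ne_zero W l), one_smul]
        rw [hsum, Algebra.smul_def]
        refine Ideal.mul_mem_left _ _ (Ideal.sum_mem _ fun w _ => ?_)
        have h1 : Ideal.Quotient.mk (l ^ n) ((w : W) • xl n) = s.1 n :=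
          hs (w : W) w.2 n (xl n) (hxl n)
        rw [← Ideal.Quotient.eq] at *
        exact h1.trans (hxl n).symm
      have hmke : ∀ n, Ideal.Quotient.mk (l ^ n) (Rey W l (xl n)) = s.1 n := by
        intro n
        rw [← hxl n, Ideal.Quotient.eq]
        exact heq n
      have hmke' : ∀ m n : ℕ, n ≤ m →
          Ideal.Quotient.mk (l ^ n) (Rey W l (xl m)) = s.1 n :=
        fun m n hnm => cmpl_down s (Rey W l (xl m)) m n hnm (hmke m)
      refine ⟨⟨fun n => Ideal.Quotient.mk _ (⟨Rey W l (xl (k * n)), hem _⟩ :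
        isotropyInvariants W l), ?_⟩, ?_⟩
      · intro n x hx
        rw [Ideal.Quotient.eq] at hx ⊢
        have hd1 : x - ⟨Rey W l (xl (k * (n + 1))), hem _⟩ ∈
            (Ideal.comap (isotropyInvariants W l).subtype l) ^ n :=
          Ideal.pow_le_pow_right (Nat.le_succ n) hx
        have hd2 : (⟨Rey W l (xl (k * (n + 1))), hem _⟩ - ⟨Rey W l (xl (k * n)), hem _⟩ :
            isotropyInvariants W l) ∈ (Ideal.comap (isotropyInvariants W l).subtype l) ^ n := by
          refine hcrux n _ ?_
          push_cast
          have e1 : Ideal.Quotient.mk (l ^ (k * n)) (Rey W l (xl (k * (n + 1)))) = s.1 (k * n) :=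
            hmke' (k * (n + 1)) (k * n) (Nat.mul_le_mul_left k (Nat.le_succ n))
          have e2 := hmke (k * n)
          rw [← Ideal.Quotient.eq] at *
          exact e1.trans e2.symm
        have := add_mem hd1 hd2
        rwa [sub_add_sub_cancel] at this
      · apply Subtype.ext; funext n
        refine (hΦ _ n ⟨Rey W l (xl (k * n)), hem _⟩ (by rfl)).symm.trans ?_
        exact hmke' (k * n) n (hnle n)
end

section
/- Let A be a left-artinian ring with enough structure so that A-Modf is an artinian category, and suppose à is a ℤ-grading on A. If M is an ungraded A-module of finite length, N a graded A-module, and π : M ↠ N a surjection of ungraded modules, then there exists a graded A-module P and a surjection of ungraded modules vP ↠ M such that the composite vP → N is obtained by forgetting the grading on a morphism of graded modules P → N. -/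
universe u
set_option maxHeartbeats 1000000
set_option synthInstance.maxHeartbeats 100000

/-- A bundled `ℤ`-graded module over a `ℤ`-graded ring `(A, 𝒜)`. -/
structure GradedModuleOver (A : Type u) [Ring A] (𝒜 : ℤ → AddSubgroup A) :
    Type (u + 1) where
  carrier : Type u
  [isAddCommGroup : AddCommGroup carrier]
  [isModule : Module A carrier]
  grading : ℤ → AddSubgroup carrier
  [isDecomposition : DirectSum.Decomposition grading]
  smul_mem : ∀ ⦃i j : ℤ⦄ ⦃a : A⦄ ⦃m : carrier⦄,
    a ∈ 𝒜 i → m ∈ grading j → a • m ∈ grading (i + j)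

attribute [instance] GradedModuleOver.isAddCommGroup GradedModuleOver.isModule
  GradedModuleOver.isDecomposition

open DirectSum


namespace GradedCoverAux

/-- Type synonym for the free module, to keep instance search fast. -/
def FreeMod (ι A : Type u) [Ring A] : Type u := ι →₀ A

variable {A : Type u} [Ring A] {ι : Type u}

noncomputable instance : AddCommGroup (FreeMod ι A) :=
  inferInstanceAs (AddCommGroup (ι →₀ A))
noncomputable instance : Module A (FreeMod ι A) :=
  inferInstanceAs (Module A (ι →₀ A))

/-- The identity, as a linear equivalence between `FreeMod ι A` and `ι →₀ A`. -/
noncomputable def eF : FreeMod ι A ≃ₗ[A] (ι →₀ A) where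
  toFun f := f
  invFun f := f
  map_add' _ _ := rfl
  map_smul' _ _ := rfl
  left_inv _ := rfl
  right_inv _ := rfl

lemma eF_zero : eF (0 : FreeMod ι A) = 0 := rfl
lemma eF_add (f g : FreeMod ι A) : eF (f + g) = eF f + eF g := rfl
lemma eF_neg (f : FreeMod ι A) : eF (-f) = -(eF f) := rfl
lemma eF_smul (a : A) (f : FreeMod ι A) : eF (a • f) = a • eF f := rfl

variable (𝒜 : ℤ → AddSubgroup A) (d : ι → ℤ)

/-- Grading on the free module with generator `i` placed in degree `d i`. -/
def fg (j : ℤ) : AddSubgroup (FreeMod ι A) where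
  carrier := {f | ∀ i, eF f i ∈ 𝒜 (j - d i)}
  add_mem' {f g} hf hg i := by
    rw [eF_add]; simpa using add_mem (hf i) (hg i)
  zero_mem' i := by rw [eF_zero]; simpa using zero_mem (𝒜 (j - d i))
  neg_mem' {f} hf i := by rw [eF_neg]; simpa using neg_mem (hf i)

lemma mem_fg {j : ℤ} {f : FreeMod ι A} : f ∈ fg 𝒜 d j ↔ ∀ i, eF f i ∈ 𝒜 (j - d i) := Iff.rfl

attribute [irreducible] fg

lemma single_mem_fg {i : ι} {k : ℤ} {a : A} (ha : a ∈ 𝒜 k) :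
    eF.symm (Finsupp.single i a) ∈ fg 𝒜 d (k + d i) := by
  rw [mem_fg]
  intro i'
  rw [LinearEquiv.apply_symm_apply]
  rcases eq_or_ne i i' with rfl | h
  · simpa using ha
  · rw [Finsupp.single_eq_of_ne' h]
    exact zero_mem _

/-- `single i` as an `AddMonoidHom` `𝒜 k →+ fg (k + d i)`. -/
noncomputable def sglHom (i : ι) (k : ℤ) : 𝒜 k →+ fg 𝒜 d (k + d i) where
  toFun a := ⟨eF.symm (Finsupp.single i (a : A)), single_mem_fg 𝒜 d a.2⟩
  map_zero' := Subtype.ext (by simp)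
  map_add' x y := Subtype.ext (by simp [Finsupp.single_add, map_add])

variable [GradedRing 𝒜]

noncomputable instance : AddCommMonoid (⨁ j, fg 𝒜 d j) := inferInstance
noncomputable instance : AddZeroClass (⨁ j, fg 𝒜 d j) := inferInstance
noncomputable instance : AddCommMonoid (⨁ k, 𝒜 k) := inferInstance
noncomputable instance : AddZeroClass (⨁ k, 𝒜 k) := inferInstance

noncomputable def decAux (i : ι) : (⨁ k, 𝒜 k) →+ ⨁ j, fg 𝒜 d j :=
  DirectSum.toAddMonoid fun k =>
    (DirectSum.of (fun j => fg 𝒜 d j) (k + d i)).comp (sglHom 𝒜 d i k)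

noncomputable def decL : (ι →₀ A) →+ ⨁ j, fg 𝒜 d j :=
  Finsupp.liftAddHom fun i =>
    (decAux 𝒜 d i).comp (DirectSum.decomposeAddEquiv 𝒜).toAddMonoidHom

noncomputable def decHom : FreeMod ι A →+ ⨁ j, fg 𝒜 d j :=
  (decL 𝒜 d).comp (eF (A := A) (ι := ι)).toAddEquiv.toAddMonoidHom

lemma decHom_apply (f : FreeMod ι A) : decHom 𝒜 d f = decL 𝒜 d (eF f) := rfl

omit [GradedRing 𝒜] in
lemma of_fg_congr {j k : ℤ} (h : k = j) (x : fg 𝒜 d k) :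
    DirectSum.of (fun j => fg 𝒜 d j) k x
      = DirectSum.of (fun j => fg 𝒜 d j) j ⟨(x : FreeMod ι A), h ▸ x.2⟩ := by
  subst h; rfl

lemma coe_decAux (i : ι) (x : ⨁ k, 𝒜 k) :
    eF (DirectSum.coeAddMonoidHom (fg 𝒜 d) (decAux 𝒜 d i x))
      = Finsupp.single i (DirectSum.coeAddMonoidHom 𝒜 x) := by
  induction x using DirectSum.induction_on with
  | zero =>
      rw [(decAux 𝒜 d i).map_zero, (DirectSum.coeAddMonoidHom (fg 𝒜 d)).map_zero,
        (DirectSum.coeAddMonoidHom 𝒜).map_zero, Finsupp.single_zero, eF_zero]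
  | of k a =>
      rw [decAux, DirectSum.toAddMonoid_of, AddMonoidHom.comp_apply,
        DirectSum.coeAddMonoidHom_of, DirectSum.coeAddMonoidHom_of]
      show eF (eF.symm (Finsupp.single i (a : A))) = _
      exact eF.apply_symm_apply _
  | add x y hx hy =>
      rw [(decAux 𝒜 d i).map_add, (DirectSum.coeAddMonoidHom (fg 𝒜 d)).map_add,
        (DirectSum.coeAddMonoidHom 𝒜).map_add, Finsupp.single_add, eF_add, hx, hy]

lemma coe_decL (g : ι →₀ A) :
    eF (DirectSum.coeAddMonoidHom (fg 𝒜 d) (decL 𝒜 d g)) = g := by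
  induction g using Finsupp.induction_linear with
  | zero => rw [(decL 𝒜 d).map_zero, (DirectSum.coeAddMonoidHom (fg 𝒜 d)).map_zero, eF_zero]
  | add f g hf hg =>
      rw [(decL 𝒜 d).map_add, (DirectSum.coeAddMonoidHom (fg 𝒜 d)).map_add, eF_add, hf, hg]
  | single i a =>
      rw [decL, Finsupp.liftAddHom_apply_single, AddMonoidHom.comp_apply, coe_decAux]
      congr 1
      show DirectSum.coeAddMonoidHom 𝒜 (DirectSum.decompose 𝒜 a) = a
      exact (DirectSum.decompose 𝒜).symm_apply_apply a

lemma coe_decHom (f : FreeMod ι A) :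
    DirectSum.coeAddMonoidHom (fg 𝒜 d) (decHom 𝒜 d f) = f := by
  apply eF.injective
  rw [decHom_apply]
  exact coe_decL 𝒜 d (eF f)

lemma decHom_mem {j : ℤ} (f : FreeMod ι A) (hf : f ∈ fg 𝒜 d j) :
    decHom 𝒜 d f = DirectSum.of (fun j => fg 𝒜 d j) j ⟨f, hf⟩ := by
  have hf' : ∀ i, (eF f) i ∈ 𝒜 (j - d i) := (mem_fg 𝒜 d).1 hf
  rw [decHom_apply, decL, Finsupp.liftAddHom_apply, Finsupp.sum]
  have step : ∀ i ∈ (eF f).support,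
      ((decAux 𝒜 d i).comp (DirectSum.decomposeAddEquiv 𝒜).toAddMonoidHom) ((eF f) i)
        = DirectSum.of (fun j => fg 𝒜 d j) j
            ⟨eF.symm (Finsupp.single i ((eF f) i)), by
              have := single_mem_fg 𝒜 d (i := i) (hf' i)
              rwa [sub_add_cancel] at this⟩ := by
    intro i _
    rw [AddMonoidHom.comp_apply]
    have h1 : (DirectSum.decomposeAddEquiv 𝒜).toAddMonoidHom ((eF f) i)
        = DirectSum.of (fun k => (𝒜 k : AddSubgroup A)) (j - d i) ⟨(eF f) i, hf' i⟩ :=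
      DirectSum.decompose_of_mem 𝒜 (hf' i)
    rw [h1, decAux, DirectSum.toAddMonoid_of, AddMonoidHom.comp_apply]
    exact of_fg_congr 𝒜 d (sub_add_cancel j (d i)) _
  rw [Finset.sum_congr rfl step,
    ← map_sum (DirectSum.of (fun j => fg 𝒜 d j) j) _ _]
  congr 1
  apply Subtype.ext
  rw [AddSubmonoidClass.coe_finset_sum]
  apply eF.injective
  rw [map_sum eF _ _]
  simp only [LinearEquiv.apply_symm_apply]
  exact Finsupp.sum_single (eF f)

noncomputable instance fgDecomposition : DirectSum.Decomposition (fg 𝒜 d) where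
  decompose' := decHom 𝒜 d
  left_inv f := coe_decHom 𝒜 d f
  right_inv x := by
    induction x using DirectSum.induction_on with
    | zero =>
        rw [(DirectSum.coeAddMonoidHom (fg 𝒜 d)).map_zero, (decHom 𝒜 d).map_zero]
    | of j y =>
        rw [DirectSum.coeAddMonoidHom_of]
        exact decHom_mem 𝒜 d (y : FreeMod ι A) y.2
    | add x y hx hy =>
        rw [(DirectSum.coeAddMonoidHom (fg 𝒜 d)).map_add, (decHom 𝒜 d).map_add, hx, hy]

lemma smul_mem_fg {k j : ℤ} {a : A} {f : FreeMod ι A}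
    (ha : a ∈ 𝒜 k) (hf : f ∈ fg 𝒜 d j) : a • f ∈ fg 𝒜 d (k + j) := by
  rw [mem_fg] at hf ⊢
  intro i
  rw [eF_smul]
  have h2 : (a • eF f) i = a * eF f i := rfl
  rw [h2, add_sub_assoc]
  exact SetLike.mul_mem_graded ha (hf i)

/-- The free graded module on generators indexed by `ι`, with `i` in degree `d i`. -/
noncomputable def freeGraded : GradedModuleOver A 𝒜 where
  carrier := FreeMod ι A
  grading := fg 𝒜 d
  smul_mem _ _ _ _ ha hf := smul_mem_fg 𝒜 d ha hf



end GradedCoverAux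

/-- **Graded covering of surjections onto graded modules.**
Let `A` be a `ℤ`-graded left-artinian ring, `M` an ungraded `A`-module of finite
length, `N` a `ℤ`-graded `A`-module and `π : M ↠ N` a surjection of ungraded
modules.  Then there exist a `ℤ`-graded `A`-module `P` and a surjection of
ungraded modules `ρ : P ↠ M` such that the composite `π ∘ ρ : P → N` is a
morphism of graded modules (preserves the gradings). -/
theorem exists_graded_cover_of_surjection_onto_graded
    {A : Type u} [Ring A] [IsArtinian A A]
    (𝒜 : ℤ → AddSubgroup A) [GradedRing 𝒜]
    {M N : Type u} [AddCommGroup M] [Module A M] [AddCommGroup N] [Module A N]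
    (hM : IsFiniteLength A M)
    (𝒩 : ℤ → AddSubgroup N) [DirectSum.Decomposition 𝒩]
    (h𝒩 : ∀ ⦃i j : ℤ⦄ ⦃a : A⦄ ⦃n : N⦄, a ∈ 𝒜 i → n ∈ 𝒩 j → a • n ∈ 𝒩 (i + j))
    (π : M →ₗ[A] N) (hπ : Function.Surjective π) :
    ∃ (P : GradedModuleOver A 𝒜) (ρ : P.carrier →ₗ[A] M),
      Function.Surjective ρ ∧
      ∀ (j : ℤ), ∀ x ∈ P.grading j, π (ρ x) ∈ 𝒩 j := by
  classical
  -- index type: a generator for each pair (m, j), plus one for each element of the kernel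
  set ι : Type u := (M × ℤ) ⊕ {m : M // π m = 0} with hι
  set d : ι → ℤ := Sum.elim (fun p => p.2) (fun _ => (0 : ℤ)) with hd
  -- choose preimages of the homogeneous components of `π m`
  have hex : ∀ (m : M) (j : ℤ), ∃ x : M, π x = (DirectSum.decompose 𝒩 (π m) j : N) :=
    fun m j => hπ _
  choose l hl using hex
  set g : ι → M := Sum.elim (fun p => l p.1 p.2) (fun k => k.1) with hg
  set ρ0 : (ι →₀ A) →ₗ[A] M := Finsupp.linearCombination A g with hρ0
  set ρ : GradedCoverAux.FreeMod ι A →ₗ[A] M :=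
    ρ0 ∘ₗ (GradedCoverAux.eF (A := A) (ι := ι)).toLinearMap with hρ
  refine ⟨GradedCoverAux.freeGraded 𝒜 d, ρ, ?_, ?_⟩
  · -- surjectivity
    intro m
    set D := DirectSum.decompose 𝒩 (π m) with hD
    set s := DFinsupp.support D with hs
    set m' : M := ∑ j ∈ s, l m j with hm'
    have hπm' : π m' = π m := by
      rw [hm', map_sum]
      have : ∀ j ∈ s, π (l m j) = (D j : N) := fun j _ => hl m j
      rw [Finset.sum_congr rfl this]
      exact DirectSum.sum_support_decompose 𝒩 (π m)
    have hk : π (m' - m) = 0 := by rw [map_sub, hπm', sub_self]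
    set x : ι →₀ A :=
      (∑ j ∈ s, Finsupp.single (Sum.inl (m, j)) (1 : A))
        - Finsupp.single (Sum.inr ⟨m' - m, hk⟩) (1 : A) with hx
    refine ⟨GradedCoverAux.eF.symm x, ?_⟩
    show ρ0 (GradedCoverAux.eF (GradedCoverAux.eF.symm x)) = m
    rw [LinearEquiv.apply_symm_apply, hx, map_sub, map_sum]
    have h2 : ∀ j ∈ s, ρ0 (Finsupp.single (Sum.inl (m, j)) (1 : A)) = l m j := by
      intro j _
      rw [hρ0, Finsupp.linearCombination_single, one_smul]
      rfl
    rw [Finset.sum_congr rfl h2, hρ0, Finsupp.linearCombination_single, one_smul]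
    show m' - (m' - m) = m
    abel
  · -- gradedness of the composite
    intro j x hx
    have hx' : ∀ i, GradedCoverAux.eF x i ∈ 𝒜 (j - d i) :=
      (GradedCoverAux.mem_fg 𝒜 d).1 hx
    show π (ρ0 (GradedCoverAux.eF x)) ∈ 𝒩 j
    have h1 : ρ0 (GradedCoverAux.eF x) = (GradedCoverAux.eF x).sum fun i a => a • g i :=
      Finsupp.linearCombination_apply A _
    rw [h1, map_finsuppSum, Finsupp.sum]
    apply sum_mem
    intro i _
    rw [map_smul]
    have hgi : π (g i) ∈ 𝒩 (d i) := by
      rcases i with p | k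
      · show π (l p.1 p.2) ∈ 𝒩 p.2
        rw [hl]
        exact (DirectSum.decompose 𝒩 (π p.1) p.2).2
      · show π k.1 ∈ 𝒩 (0 : ℤ)
        rw [k.2]
        exact zero_mem _
    have := h𝒩 (hx' i) hgi
    rwa [sub_add_cancel] at this
end
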